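/- Let G be a finite simple graph on vertex set V = {1,…,N} with graph Laplacian Δ, let η > 0 and T⁰ < T̄, let S ⊆ V with E = V ∖ S, and assume Δ(S;E) has full column rank |E|. Let F : [T⁰,T̄] → ℝ^N be continuous with component F_n(t) = 0 for every n ∈ S and all t, and let X : [T⁰,T̄] → ℝ^N be twice continuously differentiable with X''(t) + η X'(t) − Δ X(t) = F(t) for all t ∈ [T⁰,T̄] and X(T⁰) = X'(T⁰) = 0. If the components x_n(t) = 0 for all t ∈ [T⁰,T̄] and every n ∈ S, then X(t) = 0 and F(t) = 0 for all t ∈ [T⁰,T̄]. -/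
import Mathlib

open Module


lemma mulVec_eq_zero_of_rank_eq_card {m n : Type*} [Fintype m] [Fintype n]
    (A : Matrix m n ℝ) (h : A.rank = Fintype.card n) {v : n → ℝ}
    (hv : A.mulVec v = 0) : v = 0 := by
  have h1 := A.mulVecLin.finrank_range_add_finrank_ker
  rw [Matrix.rank] at h
  rw [h, Module.finrank_pi] at h1
  have hk : finrank ℝ (LinearMap.ker A.mulVecLin) = 0 := by omega
  have hker : LinearMap.ker A.mulVecLin = ⊥ := Submodule.finrank_eq_zero.mp hk
  have : v ∈ LinearMap.ker A.mulVecLin := by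
    simp [LinearMap.mem_ker, Matrix.mulVecLin_apply, hv]
  rwa [hker, Submodule.mem_bot] at this

lemma derivWithin_zero_of_zero {f : ℝ → ℝ} {d T0 Tbar t : ℝ} (hT : T0 < Tbar)
    (ht : t ∈ Set.Icc T0 Tbar)
    (hf : ∀ s ∈ Set.Icc T0 Tbar, f s = 0)
    (hd : HasDerivWithinAt f d (Set.Icc T0 Tbar) t) : d = 0 := by
  have h0 : HasDerivWithinAt f 0 (Set.Icc T0 Tbar) t :=
    (hasDerivWithinAt_const t (Set.Icc T0 Tbar) (0:ℝ)).congr hf (hf t ht)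
  have hu := (uniqueDiffOn_Icc hT) t ht
  rw [← hd.derivWithin hu, ← h0.derivWithin hu]



/-- The graph Laplacian of a finite simple graph on `Fin N`. -/
def graphLaplacian {N : ℕ} (G : SimpleGraph (Fin N)) [DecidableRel G.Adj] :
    Matrix (Fin N) (Fin N) ℝ :=
  Matrix.of fun k l => if k = l then -(G.degree k : ℝ) else if G.Adj k l then 1 else 0

/-- With a dominantly absorbent observation set `S` (the submatrix `Δ(S;E)` has full column
rank, `E = V \ S`), a solution of `X'' + η X' - Δ X = F` on `[T⁰, T̄]` with zero initial data
at `T⁰`, with `F` supported away from `S`, whose components vanish on `S` throughout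
`[T⁰, T̄]`, must vanish identically, together with the forcing `F`. -/
theorem dominantlyAbsorbent_zero_observation_implies_zero
    {N : ℕ} (G : SimpleGraph (Fin N)) [DecidableRel G.Adj]
    (η T0 Tbar : ℝ) (hη : 0 < η) (hT : T0 < Tbar)
    (S : Finset (Fin N))
    (hrank : ((graphLaplacian G).submatrix
        (fun s : {x // x ∈ S} => (s : Fin N))
        (fun e : {x // x ∈ Sᶜ} => (e : Fin N))).rank = Sᶜ.card)
    (F : ℝ → (Fin N → ℝ)) (hF : ContinuousOn F (Set.Icc T0 Tbar))
    (hFS : ∀ n ∈ S, ∀ t ∈ Set.Icc T0 Tbar, F t n = 0)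
    (X X' X'' : ℝ → (Fin N → ℝ))
    (hX : ∀ t ∈ Set.Icc T0 Tbar, HasDerivWithinAt X (X' t) (Set.Icc T0 Tbar) t)
    (hX' : ∀ t ∈ Set.Icc T0 Tbar, HasDerivWithinAt X' (X'' t) (Set.Icc T0 Tbar) t)
    (hX'' : ContinuousOn X'' (Set.Icc T0 Tbar))
    (hODE : ∀ t ∈ Set.Icc T0 Tbar,
      X'' t + η • X' t - (graphLaplacian G).mulVec (X t) = F t)
    (hinit : X T0 = 0) (hinit' : X' T0 = 0)
    (hobs : ∀ n ∈ S, ∀ t ∈ Set.Icc T0 Tbar, X t n = 0) :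
    ∀ t ∈ Set.Icc T0 Tbar, X t = 0 ∧ F t = 0 := by
  set Δ := graphLaplacian G with hΔ
  set M := Δ.submatrix (fun s : {x // x ∈ S} => (s : Fin N))
      (fun e : {x // x ∈ Sᶜ} => (e : Fin N)) with hM
  -- componentwise derivatives
  have hXc : ∀ n, ∀ t ∈ Set.Icc T0 Tbar,
      HasDerivWithinAt (fun s => X s n) (X' t n) (Set.Icc T0 Tbar) t := by
    intro n t ht
    exact (hasDerivWithinAt_pi.mp (hX t ht)) n
  have hX'c : ∀ n, ∀ t ∈ Set.Icc T0 Tbar,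
      HasDerivWithinAt (fun s => X' s n) (X'' t n) (Set.Icc T0 Tbar) t := by
    intro n t ht
    exact (hasDerivWithinAt_pi.mp (hX' t ht)) n
  -- on S, X' and X'' vanish
  have hobs' : ∀ n ∈ S, ∀ t ∈ Set.Icc T0 Tbar, X' t n = 0 := by
    intro n hn t ht
    exact derivWithin_zero_of_zero hT ht (fun s hs => hobs n hn s hs) (hXc n t ht)
  have hobs'' : ∀ n ∈ S, ∀ t ∈ Set.Icc T0 Tbar, X'' t n = 0 := by
    intro n hn t ht
    exact derivWithin_zero_of_zero hT ht (fun s hs => hobs' n hn s hs) (hX'c n t ht)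
  -- X vanishes everywhere
  have hX0 : ∀ t ∈ Set.Icc T0 Tbar, X t = 0 := by
    intro t ht
    have hmul : ∀ n ∈ S, Δ.mulVec (X t) n = 0 := by
      intro n hn
      have h1 := congrFun (hODE t ht) n
      simp only [Pi.add_apply, Pi.sub_apply, Pi.smul_apply, smul_eq_mul] at h1
      rw [hobs'' n hn t ht, hobs' n hn t ht, hFS n hn t ht] at h1
      linarith
    have hw : M.mulVec (fun e : {x // x ∈ Sᶜ} => X t e) = 0 := by
      funext s
      obtain ⟨n, hn⟩ := s
      have hfull : Δ.mulVec (X t) n = ∑ e : {x // x ∈ Sᶜ}, Δ n e * X t e := by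
        simp only [Matrix.mulVec, dotProduct]
        rw [← Finset.sum_add_sum_compl S (fun l => Δ n l * X t l)]
        rw [Finset.sum_coe_sort Sᶜ (fun l => Δ n l * X t l)]
        have : ∑ l ∈ S, Δ n l * X t l = 0 :=
          Finset.sum_eq_zero fun l hl => by rw [hobs l hl t ht, mul_zero]
        rw [this, zero_add]
      have : M.mulVec (fun e : {x // x ∈ Sᶜ} => X t e) ⟨n, hn⟩
          = ∑ e : {x // x ∈ Sᶜ}, Δ n e * X t e := by
        simp [Matrix.mulVec, dotProduct, hM, Matrix.submatrix, Finset.univ_eq_attach]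
      rw [this, ← hfull]
      exact hmul n hn
    have hcard : Matrix.rank M = Fintype.card {x // x ∈ Sᶜ} := by
      rw [hrank]; exact (Fintype.card_coe Sᶜ).symm
    have hvz := mulVec_eq_zero_of_rank_eq_card M hcard hw
    funext n
    by_cases hn : n ∈ S
    · exact hobs n hn t ht
    · have : n ∈ Sᶜ := Finset.mem_compl.mpr hn
      exact congrFun hvz ⟨n, this⟩
  -- hence X' and X'' vanish everywhere
  have hX'0 : ∀ t ∈ Set.Icc T0 Tbar, X' t = 0 := by
    intro t ht
    funext n
    exact derivWithin_zero_of_zero hT ht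
      (fun s hs => congrFun (hX0 s hs) n) (hXc n t ht)
  have hX''0 : ∀ t ∈ Set.Icc T0 Tbar, X'' t = 0 := by
    intro t ht
    funext n
    exact derivWithin_zero_of_zero hT ht
      (fun s hs => congrFun (hX'0 s hs) n) (hX'c n t ht)
  intro t ht
  refine ⟨hX0 t ht, ?_⟩
  rw [← hODE t ht, hX0 t ht, hX'0 t ht, hX''0 t ht]
  simp [Matrix.mulVec_zero]
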